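/- (Semantic form of the Corollary: decomposition of the π/4-phase gadget.) Let n ≥ 3 and let x : Fin n → ℤ with x i ∈ {0,1} for all i. Write p(x_{i₁},…,x_{i_k}) ∈ {0,1} for the parity (iterated XOR) of the listed bits. Set σ = (n-2)(n-3)π/8 and τ = (3-n)π/4. Then Complex.exp(I·(π/4)·p(x₁,…,xₙ)) = (∏_{i} Complex.exp(I·σ·x i)) · (∏_{i < j} Complex.exp(I·τ·p(x i, x j))) · (∏_{i < j < k} Complex.exp(I·(π/4)·p(x i, x j, x k))). -/

import Mathlib

open Finset Real

/-- XOR of integer bits. -/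
def xorZ (u v : ℤ) : ℤ := u + v - 2 * u * v

namespace PhaseGadgetAux

variable {n : ℕ}

/-- Pairs `i < j` drawn from `s`. -/
def pairsOf (s : Finset (Fin n)) : Finset (Fin n × Fin n) :=
  (s ×ˢ s).filter (fun p => p.1 < p.2)

/-- Triples `i < j < k` drawn from `s`. -/
def triplesOf (s : Finset (Fin n)) : Finset (Fin n × Fin n × Fin n) :=
  (s ×ˢ s ×ˢ s).filter (fun t => t.1 < t.2.1 ∧ t.2.1 < t.2.2)

lemma pairsOf_insert (a : Fin n) (s : Finset (Fin n)) (hmax : ∀ i ∈ s, i < a) :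
    pairsOf (insert a s) = pairsOf s ∪ s.image (fun i => (i, a)) := by
  ext ⟨u, v⟩
  simp only [pairsOf, mem_filter, mem_product, mem_insert, mem_union, mem_image, Prod.mk.injEq]
  constructor
  · rintro ⟨⟨hu, hv⟩, huv⟩
    rcases hv with rfl | hv
    · rcases hu with rfl | hu
      · exact absurd huv (lt_irrefl _)
      · exact Or.inr ⟨u, hu, rfl, rfl⟩
    · rcases hu with rfl | hu
      · exact absurd (huv.trans (hmax v hv)) (lt_irrefl _)
      · exact Or.inl ⟨⟨hu, hv⟩, huv⟩
  · rintro (⟨⟨hu, hv⟩, huv⟩ | ⟨i, hi, rfl, rfl⟩)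
    · exact ⟨⟨Or.inr hu, Or.inr hv⟩, huv⟩
    · exact ⟨⟨Or.inr hi, Or.inl rfl⟩, hmax _ hi⟩

lemma triplesOf_insert (a : Fin n) (s : Finset (Fin n)) (hmax : ∀ i ∈ s, i < a) :
    triplesOf (insert a s) = triplesOf s ∪ (pairsOf s).image (fun p => (p.1, p.2, a)) := by
  ext ⟨u, v, w⟩
  simp only [triplesOf, pairsOf, mem_filter, mem_product, mem_insert, mem_union, mem_image,
    Prod.mk.injEq, Prod.exists]
  constructor
  · rintro ⟨⟨hu, hv, hw⟩, huv, hvw⟩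
    rcases hw with rfl | hw
    · have hv' : v ∈ s := by
        rcases hv with rfl | hv
        · exact absurd hvw (lt_irrefl _)
        · exact hv
      have hu' : u ∈ s := by
        rcases hu with rfl | hu
        · exact absurd (huv.trans (hmax v hv')) (lt_irrefl _)
        · exact hu
      exact Or.inr ⟨u, v, ⟨⟨hu', hv'⟩, huv⟩, rfl, rfl, rfl⟩
    · have hv' : v ∈ s := by
        rcases hv with rfl | hv
        · exact absurd (hvw.trans (hmax w hw)) (lt_irrefl _)
        · exact hv
      have hu' : u ∈ s := by
        rcases hu with rfl | hu
        · exact absurd ((huv.trans hvw).trans (hmax w hw)) (lt_irrefl _)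
        · exact hu
      exact Or.inl ⟨⟨hu', hv', hw⟩, huv, hvw⟩
  · rintro (⟨⟨hu, hv, hw⟩, huv, hvw⟩ | ⟨i, j, ⟨⟨hi, hj⟩, hij⟩, rfl, rfl, rfl⟩)
    · exact ⟨⟨Or.inr hu, Or.inr hv, Or.inr hw⟩, huv, hvw⟩
    · exact ⟨⟨Or.inr hi, Or.inr hj, Or.inl rfl⟩, hij, hmax _ hj⟩

lemma not_mem_of_max (a : Fin n) (s : Finset (Fin n)) (hmax : ∀ i ∈ s, i < a) : a ∉ s :=
  fun ha => absurd (hmax a ha) (lt_irrefl _)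

lemma sum_pairsOf_insert (a : Fin n) (s : Finset (Fin n)) (hmax : ∀ i ∈ s, i < a)
    (f : Fin n → Fin n → ℤ) :
    ∑ p ∈ pairsOf (insert a s), f p.1 p.2
      = (∑ p ∈ pairsOf s, f p.1 p.2) + ∑ i ∈ s, f i a := by
  rw [pairsOf_insert a s hmax, Finset.sum_union, Finset.sum_image]
  · intro i _ j _ h
    exact ((Prod.mk.injEq _ _ _ _).mp h).1
  · rw [Finset.disjoint_left]
    rintro ⟨u, v⟩ hp hq
    simp only [pairsOf, mem_filter, mem_product] at hp
    simp only [mem_image, Prod.mk.injEq] at hq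
    obtain ⟨i, hi, rfl, rfl⟩ := hq
    exact absurd (hmax _ hp.1.2) (lt_irrefl _)

lemma sum_triplesOf_insert (a : Fin n) (s : Finset (Fin n)) (hmax : ∀ i ∈ s, i < a)
    (f : Fin n → Fin n → Fin n → ℤ) :
    ∑ t ∈ triplesOf (insert a s), f t.1 t.2.1 t.2.2
      = (∑ t ∈ triplesOf s, f t.1 t.2.1 t.2.2) + ∑ p ∈ pairsOf s, f p.1 p.2 a := by
  rw [triplesOf_insert a s hmax, Finset.sum_union, Finset.sum_image]
  · rintro ⟨i, j⟩ _ ⟨k, l⟩ _ h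
    simp only [Prod.mk.injEq] at h
    exact Prod.ext h.1 h.2.1
  · rw [Finset.disjoint_left]
    rintro ⟨u, v, w⟩ hp hq
    simp only [triplesOf, mem_filter, mem_product] at hp
    simp only [mem_image, Prod.mk.injEq, Prod.exists] at hq
    obtain ⟨i, j, _, rfl, rfl, rfl⟩ := hq
    exact absurd (hmax _ hp.1.2.2) (lt_irrefl _)

lemma sum_xorZ_const {ι : Type*} (s : Finset ι) (g : ι → ℤ) (c : ℤ) :
    ∑ i ∈ s, xorZ (g i) c = (1 - 2 * c) * (∑ i ∈ s, g i) + (s.card : ℤ) * c := by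
  calc ∑ i ∈ s, xorZ (g i) c = ∑ i ∈ s, ((1 - 2 * c) * g i + c) :=
        Finset.sum_congr rfl (fun i _ => by unfold xorZ; ring)
    _ = (1 - 2 * c) * (∑ i ∈ s, g i) + (s.card : ℤ) * c := by
        rw [Finset.sum_add_distrib, ← Finset.mul_sum, Finset.sum_const, nsmul_eq_mul]

variable (x : Fin n → ℤ)

/-- The parity bit of the total sum over `s`. -/
def bitZ (s : Finset (Fin n)) : ℤ := if Odd (∑ i ∈ s, x i) then 1 else 0

lemma two_dvd_bit_sub (s : Finset (Fin n)) : (2 : ℤ) ∣ bitZ x s - ∑ i ∈ s, x i := by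
  unfold bitZ
  rcases Int.even_or_odd (∑ i ∈ s, x i) with he | ho
  · rw [if_neg (Int.not_odd_iff_even.mpr he)]
    obtain ⟨k, hk⟩ := he
    exact ⟨-k, by rw [hk]; ring⟩
  · rw [if_pos ho]
    obtain ⟨k, hk⟩ := ho
    exact ⟨-k, by rw [hk]; ring⟩

lemma bitZ_insert (a : Fin n) (s : Finset (Fin n)) (ha : a ∉ s) (hb : x a = 0 ∨ x a = 1) :
    bitZ x (insert a s) = bitZ x s + x a - 2 * x a * bitZ x s := by
  unfold bitZ
  rw [Finset.sum_insert ha]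
  rcases hb with h | h
  · simp [h]
  · rw [h]
    rcases Int.even_or_odd (∑ i ∈ s, x i) with he | ho
    · rw [if_neg (Int.not_odd_iff_even.mpr he),
        if_pos (by rw [add_comm]; exact he.add_one)]
      ring
    · rw [if_pos ho,
        if_neg (Int.not_odd_iff_even.mpr (by rw [add_comm]; exact ho.add_one))]
      ring

lemma cardPairs (s : Finset (Fin n)) :
    2 * ((pairsOf s).card : ℤ) = (s.card : ℤ) * ((s.card : ℤ) - 1) := by
  induction s using Finset.induction_on_max with
  | empty => simp [pairsOf]
  | insert a s hmax ih =>
    have hcard : ((pairsOf (insert a s)).card : ℤ)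
        = ((pairsOf s).card : ℤ) + (s.card : ℤ) := by
      have h1 := sum_pairsOf_insert a s hmax (fun _ _ => (1 : ℤ))
      simp only [Finset.sum_const, nsmul_eq_mul, mul_one] at h1
      exact h1
    rw [hcard, Finset.card_insert_of_notMem (not_mem_of_max a s hmax)]
    push_cast
    linear_combination ih

variable (hx : ∀ i, x i = 0 ∨ x i = 1)

include hx

lemma four_dvd (s : Finset (Fin n)) :
    (4 : ℤ) ∣ bitZ x s - (∑ i ∈ s, x i) + 2 * ∑ p ∈ pairsOf s, x p.1 * x p.2 := by
  induction s using Finset.induction_on_max with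
  | empty => simp [bitZ, pairsOf]
  | insert a s hmax ih =>
    have ha := not_mem_of_max a s hmax
    rw [bitZ_insert x a s ha (hx a), Finset.sum_insert ha,
      sum_pairsOf_insert a s hmax (fun i j => x i * x j), ← Finset.sum_mul]
    obtain ⟨t, ht⟩ := two_dvd_bit_sub x s
    obtain ⟨l, hl⟩ := ih
    exact ⟨l - x a * t, by linear_combination hl - 2 * (x a) * ht⟩

lemma pairXorSum (s : Finset (Fin n)) :
    ∑ p ∈ pairsOf s, xorZ (x p.1) (x p.2)
      = ((s.card : ℤ) - 1) * (∑ i ∈ s, x i)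
        - 2 * ∑ p ∈ pairsOf s, x p.1 * x p.2 := by
  induction s using Finset.induction_on_max with
  | empty => simp [pairsOf]
  | insert a s hmax ih =>
    have ha := not_mem_of_max a s hmax
    rw [sum_pairsOf_insert a s hmax (fun i j => xorZ (x i) (x j)),
      sum_pairsOf_insert a s hmax (fun i j => x i * x j),
      Finset.sum_insert ha, Finset.card_insert_of_notMem ha,
      sum_xorZ_const s x (x a), ← Finset.sum_mul]
    push_cast
    linear_combination ih

lemma main_dvd (s : Finset (Fin n)) :
    (16 : ℤ) ∣ 2 * bitZ x s
      - (((s.card : ℤ) - 2) * ((s.card : ℤ) - 3) * (∑ i ∈ s, x i)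
        + 2 * (3 - (s.card : ℤ)) * (∑ p ∈ pairsOf s, xorZ (x p.1) (x p.2))
        + 2 * ∑ t ∈ triplesOf s, xorZ (xorZ (x t.1) (x t.2.1)) (x t.2.2)) := by
  induction s using Finset.induction_on_max with
  | empty => simp [bitZ, pairsOf, triplesOf]
  | insert a s hmax ih =>
    have ha := not_mem_of_max a s hmax
    rw [bitZ_insert x a s ha (hx a), Finset.sum_insert ha,
      sum_pairsOf_insert a s hmax (fun i j => xorZ (x i) (x j)),
      sum_triplesOf_insert a s hmax (fun i j k => xorZ (xorZ (x i) (x j)) (x k)),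
      sum_xorZ_const s x (x a),
      sum_xorZ_const (pairsOf s) (fun p => xorZ (x p.1) (x p.2)) (x a),
      Finset.card_insert_of_notMem ha]
    obtain ⟨k, hk⟩ := ih
    obtain ⟨l, hl⟩ := four_dvd x hx s
    have hQ := cardPairs s
    have hP2 := pairXorSum x hx s
    refine ⟨k - x a * l, ?_⟩
    push_cast
    linear_combination hk - 4 * (x a) * hl - (x a) * hQ + 4 * (x a) * hP2

end PhaseGadgetAux

open PhaseGadgetAux

theorem pi_div_four_phase_gadget_decomposition (n : ℕ) (hn : 3 ≤ n) (x : Fin n → ℤ)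
    (hx : ∀ i, x i = 0 ∨ x i = 1) :
    Complex.exp (Complex.I * (π / 4 : ℝ) *
        (if Odd ((Finset.univ.filter (fun i => x i = 1)).card) then (1 : ℂ) else 0)) =
      (∏ i, Complex.exp (Complex.I * ((((n : ℝ) - 2) * ((n : ℝ) - 3) * π / 8 : ℝ) : ℂ) *
          (x i : ℂ))) *
      (∏ p ∈ Finset.univ.filter (fun p : Fin n × Fin n => p.1 < p.2),
          Complex.exp (Complex.I * (((3 - (n : ℝ)) * π / 4 : ℝ) : ℂ) *
            ((xorZ (x p.1) (x p.2) : ℤ) : ℂ))) *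
      (∏ t ∈ Finset.univ.filter
            (fun t : Fin n × Fin n × Fin n => t.1 < t.2.1 ∧ t.2.1 < t.2.2),
          Complex.exp (Complex.I * (π / 4 : ℝ) *
            ((xorZ (xorZ (x t.1) (x t.2.1)) (x t.2.2) : ℤ) : ℂ))) := by
  classical
  -- identify index sets
  have hpairs : Finset.univ.filter (fun p : Fin n × Fin n => p.1 < p.2)
      = pairsOf (Finset.univ : Finset (Fin n)) := by
    simp [pairsOf, Finset.univ_product_univ]
  have htriples : Finset.univ.filter
        (fun t : Fin n × Fin n × Fin n => t.1 < t.2.1 ∧ t.2.1 < t.2.2)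
      = triplesOf (Finset.univ : Finset (Fin n)) := by
    simp [triplesOf, Finset.univ_product_univ]
  -- the parity bit
  have hcard : ((Finset.univ.filter (fun i => x i = 1)).card : ℤ) = ∑ i, x i := by
    rw [Finset.card_filter]
    push_cast
    refine Finset.sum_congr rfl (fun i _ => ?_)
    rcases hx i with h | h <;> simp [h]
  have hodd : Odd ((Finset.univ.filter (fun i => x i = 1)).card) ↔ Odd (∑ i, x i) := by
    rw [← hcard, Int.odd_coe_nat]
  have hbit : (if Odd ((Finset.univ.filter (fun i => x i = 1)).card) then (1 : ℂ) else 0)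
      = ((bitZ x Finset.univ : ℤ) : ℂ) := by
    unfold bitZ
    rw [if_congr hodd rfl rfl]
    split <;> simp
  -- abbreviations
  set θ : ℂ := ((π / 8 : ℝ) : ℂ) with hθ
  -- rewrite each factor as exp (I θ k) for an integer k
  have h1 : ∀ i : Fin n,
      Complex.exp (Complex.I * ((((n : ℝ) - 2) * ((n : ℝ) - 3) * π / 8 : ℝ) : ℂ) * (x i : ℂ))
        = Complex.exp (Complex.I * θ * ((((n : ℤ) - 2) * ((n : ℤ) - 3) * x i : ℤ) : ℂ)) := by
    intro i
    congr 1
    rw [hθ]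
    push_cast
    ring
  have h2 : ∀ p : Fin n × Fin n,
      Complex.exp (Complex.I * (((3 - (n : ℝ)) * π / 4 : ℝ) : ℂ) *
          ((xorZ (x p.1) (x p.2) : ℤ) : ℂ))
        = Complex.exp (Complex.I * θ *
            ((2 * (3 - (n : ℤ)) * xorZ (x p.1) (x p.2) : ℤ) : ℂ)) := by
    intro p
    congr 1
    rw [hθ]
    push_cast
    ring
  have h3 : ∀ t : Fin n × Fin n × Fin n,
      Complex.exp (Complex.I * (π / 4 : ℝ) *
          ((xorZ (xorZ (x t.1) (x t.2.1)) (x t.2.2) : ℤ) : ℂ))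
        = Complex.exp (Complex.I * θ *
            ((2 * xorZ (xorZ (x t.1) (x t.2.1)) (x t.2.2) : ℤ) : ℂ)) := by
    intro t
    congr 1
    rw [hθ]
    push_cast
    ring
  have hLHS : Complex.exp (Complex.I * (π / 4 : ℝ) *
        (if Odd ((Finset.univ.filter (fun i => x i = 1)).card) then (1 : ℂ) else 0))
      = Complex.exp (Complex.I * θ * ((2 * bitZ x Finset.univ : ℤ) : ℂ)) := by
    rw [hbit]
    congr 1
    rw [hθ]
    push_cast
    ring
  -- convert products of exponentials to exponentials of sums
  have hprod : ∀ {ι : Type} (s : Finset ι) (g : ι → ℤ),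
      (∏ i ∈ s, Complex.exp (Complex.I * θ * ((g i : ℤ) : ℂ)))
        = Complex.exp (Complex.I * θ * ((∑ i ∈ s, g i : ℤ) : ℂ)) := by
    intro ι s g
    rw [← Complex.exp_sum]
    congr 1
    rw [← Finset.mul_sum]
    congr 1
    push_cast
    rfl
  rw [hLHS]
  calc Complex.exp (Complex.I * θ * ((2 * bitZ x Finset.univ : ℤ) : ℂ))
      = Complex.exp (Complex.I * θ *
          (((((n : ℤ) - 2) * ((n : ℤ) - 3) * (∑ i, x i)
            + 2 * (3 - (n : ℤ)) * (∑ p ∈ pairsOf (Finset.univ : Finset (Fin n)),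
                xorZ (x p.1) (x p.2))
            + 2 * ∑ t ∈ triplesOf (Finset.univ : Finset (Fin n)),
                xorZ (xorZ (x t.1) (x t.2.1)) (x t.2.2)) : ℤ) : ℂ)) := by
        rw [Complex.exp_eq_exp_iff_exists_int]
        have hmain := main_dvd x hx (Finset.univ : Finset (Fin n))
        rw [Finset.card_univ, Fintype.card_fin] at hmain
        obtain ⟨k, hk⟩ := hmain
        refine ⟨k, ?_⟩
        have hk' : ((2 * bitZ x Finset.univ : ℤ) : ℂ)
            - ((((n : ℤ) - 2) * ((n : ℤ) - 3) * (∑ i, x i)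
              + 2 * (3 - (n : ℤ)) * (∑ p ∈ pairsOf (Finset.univ : Finset (Fin n)),
                  xorZ (x p.1) (x p.2))
              + 2 * ∑ t ∈ triplesOf (Finset.univ : Finset (Fin n)),
                  xorZ (xorZ (x t.1) (x t.2.1)) (x t.2.2)) : ℤ) = 16 * (k : ℂ) := by
          rw [← Int.cast_sub, hk]
          push_cast
          ring
        have hπ : θ = ((π : ℝ) : ℂ) / 8 := by rw [hθ]; push_cast; ring
        rw [hπ]
        have hπc : ((π : ℝ) : ℂ) = (π : ℂ) := rfl
        linear_combination (Complex.I * ((π : ℝ) : ℂ) / 8) * hk'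
    _ = _ := by
        rw [hpairs, htriples]
        rw [show (∏ i, Complex.exp (Complex.I *
              ((((n : ℝ) - 2) * ((n : ℝ) - 3) * π / 8 : ℝ) : ℂ) * (x i : ℂ)))
            = ∏ i, Complex.exp (Complex.I * θ *
              ((((n : ℤ) - 2) * ((n : ℤ) - 3) * x i : ℤ) : ℂ)) from
          Finset.prod_congr rfl (fun i _ => h1 i)]
        rw [show (∏ p ∈ pairsOf (Finset.univ : Finset (Fin n)),
              Complex.exp (Complex.I * (((3 - (n : ℝ)) * π / 4 : ℝ) : ℂ) *
                ((xorZ (x p.1) (x p.2) : ℤ) : ℂ)))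
            = ∏ p ∈ pairsOf (Finset.univ : Finset (Fin n)),
              Complex.exp (Complex.I * θ *
                ((2 * (3 - (n : ℤ)) * xorZ (x p.1) (x p.2) : ℤ) : ℂ)) from
          Finset.prod_congr rfl (fun p _ => h2 p)]
        rw [show (∏ t ∈ triplesOf (Finset.univ : Finset (Fin n)),
              Complex.exp (Complex.I * (π / 4 : ℝ) *
                ((xorZ (xorZ (x t.1) (x t.2.1)) (x t.2.2) : ℤ) : ℂ)))
            = ∏ t ∈ triplesOf (Finset.univ : Finset (Fin n)),
              Complex.exp (Complex.I * θ *
                ((2 * xorZ (xorZ (x t.1) (x t.2.1)) (x t.2.2) : ℤ) : ℂ)) from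
          Finset.prod_congr rfl (fun t _ => h3 t)]
        rw [hprod, hprod, hprod, ← Complex.exp_add, ← Complex.exp_add]
        have hZ : ((n : ℤ) - 2) * ((n : ℤ) - 3) * (∑ i, x i)
            + 2 * (3 - (n : ℤ)) * (∑ p ∈ pairsOf (Finset.univ : Finset (Fin n)),
                xorZ (x p.1) (x p.2))
            + 2 * ∑ t ∈ triplesOf (Finset.univ : Finset (Fin n)),
                xorZ (xorZ (x t.1) (x t.2.1)) (x t.2.2)
            = (∑ i, ((n : ℤ) - 2) * ((n : ℤ) - 3) * x i)
              + (∑ p ∈ pairsOf (Finset.univ : Finset (Fin n)),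
                  2 * (3 - (n : ℤ)) * xorZ (x p.1) (x p.2))
              + (∑ t ∈ triplesOf (Finset.univ : Finset (Fin n)),
                  2 * xorZ (xorZ (x t.1) (x t.2.1)) (x t.2.2)) := by
          rw [Finset.mul_sum, Finset.mul_sum, Finset.mul_sum]
        congr 1
        rw [hZ, Int.cast_add, Int.cast_add, mul_add, mul_add]
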